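/- arXiv:1609.01811 — 3 statements merged into one kernel-verified Lean document; each statement's English description precedes it below -/
import Mathlib

section
/- Let F be a continuous univariate distribution function on ℝ with finite mean, and for a point set {x_1,…,x_n} ⊆ ℝ let F_n denote its empirical distribution function. Then E(F,F_n) = 2·D₂(F,F_n)², where D₂(F,F_n) = (∫ |F_n(x) − F(x)|² dx)^{1/2} is the L₂-discrepancy; consequently, a point set of size n minimizes the energy distance E(F,F_n) over all n-point sets if and only if it minimizes the L₂-discrepancy D₂(F,F_n). -/
open MeasureTheory Finset

/-- Energy distance between a univariate distribution `F` and the empirical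
distribution of the point set `x_1, …, x_n`:
`E(F,F_n) = (2/n) Σᵢ E|xᵢ − Y| − (1/n²) Σᵢ Σⱼ |xᵢ − xⱼ| − E|Y − Y'|`. -/
noncomputable def energyDistE (F : Measure ℝ) {n : ℕ} (x : Fin n → ℝ) : ℝ :=
  (2 / n) * ∑ i, ∫ y, |x i - y| ∂F
    - (1 / (n : ℝ) ^ 2) * ∑ i, ∑ j, |x i - x j|
    - ∫ y, (∫ y', |y - y'| ∂F) ∂F

/-- Empirical distribution function of the point set `x_1, …, x_n`. -/
noncomputable def edf {n : ℕ} (x : Fin n → ℝ) (t : ℝ) : ℝ :=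
  ((Finset.univ.filter (fun i => x i ≤ t)).card : ℝ) / n

/-- The `L₂`-discrepancy `D₂(F,F_n) = (∫ |F_n(t) − F(t)|² dt)^{1/2}`. -/
noncomputable def L2disc (F : Measure ℝ) {n : ℕ} (x : Fin n → ℝ) : ℝ :=
  Real.sqrt (∫ t, |edf x t - (F (Set.Iic t)).toReal| ^ 2)

noncomputable def ind (a t : ℝ) : ℝ := if a ≤ t then 1 else 0

lemma ind_eq_indicator (t : ℝ) : (fun a => ind a t) = Set.indicator (Set.Iic t) (fun _ => (1:ℝ)) := by
  funext a; simp [ind, Set.indicator, Set.mem_Iic]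

lemma ind_sq (a t : ℝ) : ind a t ^ 2 = ind a t := by
  unfold ind; split <;> norm_num

lemma measurable_ind2 : Measurable (fun p : ℝ × ℝ => ind p.1 p.2) := by
  unfold ind
  exact Measurable.ite (measurableSet_le measurable_fst measurable_snd) measurable_const measurable_const

lemma sq_diff_ind (a b t : ℝ) :
    (ind a t - ind b t) ^ 2 = Set.indicator (Set.Ico (min a b) (max a b)) (fun _ => (1:ℝ)) t := by
  unfold ind
  by_cases ha : a ≤ t <;> by_cases hb : b ≤ t
  · simp [Set.indicator, Set.mem_Ico, ha, hb, not_lt.2 (max_le ha hb)]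
  · simp [Set.indicator, Set.mem_Ico, ha, hb, min_le_of_left_le ha, lt_max_of_lt_right (not_le.1 hb)]
  · simp [Set.indicator, Set.mem_Ico, ha, hb, min_le_of_right_le hb, lt_max_of_lt_left (not_le.1 ha)]
  · simp [Set.indicator, Set.mem_Ico, ha, hb, not_le.2 (lt_min (not_le.1 ha) (not_le.1 hb))]

lemma integral_sq_diff_ind (a b : ℝ) :
    ∫ t, (ind a t - ind b t) ^ 2 = |a - b| := by
  simp only [sq_diff_ind]
  rw [integral_indicator measurableSet_Ico]
  rcases le_total a b with h | h
  · simp [min_def, max_def, h, abs_of_nonpos (by linarith : a - b ≤ 0)]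
  · simp [min_def, max_def, h, abs_of_nonneg (by linarith : 0 ≤ a - b)]

lemma integrable_sq_diff_ind (a b : ℝ) :
    Integrable (fun t => (ind a t - ind b t) ^ 2) := by
  simp only [sq_diff_ind]
  rw [integrable_indicator_iff measurableSet_Ico]
  exact integrableOn_const measure_Ico_lt_top.ne

lemma sq_diff_ind_le_one (a b t : ℝ) : (ind a t - ind b t) ^ 2 ≤ 1 := by
  unfold ind; split_ifs <;> norm_num

lemma integrable_abs_sub_const (F : Measure ℝ) [IsProbabilityMeasure F]
    (hmean : Integrable (fun y => |y|) F) (a : ℝ) :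
    Integrable (fun y => |a - y|) F := by
  refine ((integrable_const |a|).add hmean).mono
    ((continuous_const.sub continuous_id).abs.aestronglyMeasurable) ?_
  filter_upwards with y
  have h1 : |a - y| ≤ |a| + |y| := by
    calc |a - y| = |a + -y| := by rw [sub_eq_add_neg]
    _ ≤ |a| + |-y| := abs_add_le _ _
    _ = |a| + |y| := by rw [abs_neg]
  simpa [Real.norm_eq_abs, abs_abs, abs_of_nonneg (by positivity : (0:ℝ) ≤ |a| + |y|)] using h1

lemma integrable_prod_A (F : Measure ℝ) [IsProbabilityMeasure F]
    (hmean : Integrable (fun y => |y|) F) (a : ℝ) :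
    Integrable (fun p : ℝ × ℝ => (ind a p.2 - ind p.1 p.2) ^ 2) (F.prod volume) := by
  refine (integrable_prod_iff ?_).2 ⟨?_, ?_⟩
  · exact (((measurable_ind2.comp (measurable_const.prodMk measurable_snd)).sub
      measurable_ind2).pow_const 2).aestronglyMeasurable
  · filter_upwards with y using integrable_sq_diff_ind a y
  · have : (fun y => ∫ t, ‖(ind a t - ind y t) ^ 2‖) = fun y => |a - y| := by
      funext y
      rw [← integral_sq_diff_ind a y]
      congr 1; funext t; rw [Real.norm_eq_abs, abs_of_nonneg (sq_nonneg _)]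
    rw [this]; exact integrable_abs_sub_const F hmean a

lemma swap_A (F : Measure ℝ) [IsProbabilityMeasure F]
    (hmean : Integrable (fun y => |y|) F) (a : ℝ) :
    ∫ y, |a - y| ∂F = ∫ t, ∫ y, (ind a t - ind y t) ^ 2 ∂F := by
  have h := integral_integral_swap (f := fun (y t : ℝ) => (ind a t - ind y t) ^ 2)
    (μ := F) (ν := volume) (integrable_prod_A F hmean a)
  rw [← h]
  exact integral_congr_ae (Filter.Eventually.of_forall fun y => (integral_sq_diff_ind a y).symm)

lemma integrable_abs_sub_prod (F : Measure ℝ) [IsProbabilityMeasure F]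
    (hmean : Integrable (fun y => |y|) F) :
    Integrable (fun p : ℝ × ℝ => |p.1 - p.2|) (F.prod F) := by
  refine (integrable_prod_iff ?_).2 ⟨?_, ?_⟩
  · exact (continuous_fst.sub continuous_snd).abs.aestronglyMeasurable
  · filter_upwards with y using integrable_abs_sub_const F hmean y
  · have hsm : StronglyMeasurable (fun y => ∫ y', ‖|y - y'|‖ ∂F) :=
      StronglyMeasurable.integral_prod_right'
        (f := fun p : ℝ × ℝ => ‖|p.1 - p.2|‖)
        ((continuous_fst.sub continuous_snd).abs.norm.stronglyMeasurable)
    refine (hmean.add (integrable_const (∫ y', |y'| ∂F))).mono hsm.aestronglyMeasurable ?_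
    filter_upwards with y
    have h1 : ∫ y', |y - y'| ∂F ≤ |y| + ∫ y', |y'| ∂F := by
      have hmono := integral_mono (integrable_abs_sub_const F hmean y)
          ((integrable_const |y|).add hmean) (fun y' => by
            calc |y - y'| = |y + -y'| := by rw [sub_eq_add_neg]
            _ ≤ |y| + |-y'| := abs_add_le _ _
            _ = |y| + |y'| := by rw [abs_neg])
      simp only [Pi.add_apply] at hmono
      rwa [integral_add (integrable_const _) hmean, integral_const, probReal_univ,
        one_smul] at hmono
    have h3 : (0:ℝ) ≤ |y| + ∫ y', |y'| ∂F := by positivity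
    simp only [Real.norm_eq_abs, abs_abs, Pi.add_apply]
    rw [abs_of_nonneg (integral_nonneg fun _ => abs_nonneg _), abs_of_nonneg h3]
    exact h1

lemma integrable_prod_C (F : Measure ℝ) [IsProbabilityMeasure F]
    (hmean : Integrable (fun y => |y|) F) :
    Integrable (fun q : (ℝ × ℝ) × ℝ => (ind q.1.1 q.2 - ind q.1.2 q.2) ^ 2)
      ((F.prod F).prod volume) := by
  refine (integrable_prod_iff ?_).2 ⟨?_, ?_⟩
  · exact (((measurable_ind2.comp ((measurable_fst.comp measurable_fst).prodMk
      measurable_snd)).sub (measurable_ind2.comp ((measurable_snd.comp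
      measurable_fst).prodMk measurable_snd))).pow_const 2).aestronglyMeasurable
  · filter_upwards with p using integrable_sq_diff_ind p.1 p.2
  · have : (fun p : ℝ × ℝ => ∫ t, ‖(ind p.1 t - ind p.2 t) ^ 2‖)
        = fun p : ℝ × ℝ => |p.1 - p.2| := by
      funext p
      rw [← integral_sq_diff_ind p.1 p.2]
      congr 1; funext t; rw [Real.norm_eq_abs, abs_of_nonneg (sq_nonneg _)]
    rw [this]; exact integrable_abs_sub_prod F hmean

lemma integrable_sq_diff_prod (F : Measure ℝ) [IsProbabilityMeasure F] (t : ℝ) :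
    Integrable (fun p : ℝ × ℝ => (ind p.1 t - ind p.2 t) ^ 2) (F.prod F) := by
  refine (integrable_const (1:ℝ)).mono ?_ ?_
  · exact (((measurable_ind2.comp (measurable_fst.prodMk measurable_const)).sub
      (measurable_ind2.comp (measurable_snd.prodMk measurable_const))).pow_const
      2).aestronglyMeasurable
  · filter_upwards with p
    rw [Real.norm_eq_abs, abs_of_nonneg (sq_nonneg _), norm_one]
    exact sq_diff_ind_le_one _ _ _

lemma swap_C (F : Measure ℝ) [IsProbabilityMeasure F]
    (hmean : Integrable (fun y => |y|) F) :
    ∫ y, (∫ y', |y - y'| ∂F) ∂F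
      = ∫ t, ∫ y, ∫ y', (ind y t - ind y' t) ^ 2 ∂F ∂F := by
  have h0 : ∫ y, (∫ y', |y - y'| ∂F) ∂F = ∫ p, |p.1 - p.2| ∂(F.prod F) :=
    (integral_prod _ (integrable_abs_sub_prod F hmean)).symm
  have h := integral_integral_swap (f := fun (p : ℝ × ℝ) (t : ℝ) => (ind p.1 t - ind p.2 t) ^ 2)
    (μ := F.prod F) (ν := volume) (integrable_prod_C F hmean)
  rw [h0]
  calc ∫ p, |p.1 - p.2| ∂(F.prod F)
      = ∫ p, (∫ t, (ind p.1 t - ind p.2 t) ^ 2) ∂(F.prod F) :=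
        integral_congr_ae (Filter.Eventually.of_forall fun p =>
          (integral_sq_diff_ind p.1 p.2).symm)
    _ = ∫ t, ∫ p, (ind p.1 t - ind p.2 t) ^ 2 ∂(F.prod F) := h
    _ = ∫ t, ∫ y, ∫ y', (ind y t - ind y' t) ^ 2 ∂F ∂F :=
        integral_congr_ae (Filter.Eventually.of_forall fun t =>
          integral_prod _ (integrable_sq_diff_prod F t))

lemma integrable_ind (F : Measure ℝ) [IsProbabilityMeasure F] (t : ℝ) :
    Integrable (fun y => ind y t) F := by
  rw [ind_eq_indicator t]
  exact (integrable_indicator_iff measurableSet_Iic).2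
    (integrableOn_const (measure_lt_top F _).ne)

lemma integral_ind (F : Measure ℝ) [IsProbabilityMeasure F] (t : ℝ) :
    ∫ y, ind y t ∂F = (F (Set.Iic t)).toReal := by
  rw [ind_eq_indicator t, integral_indicator measurableSet_Iic, setIntegral_const,
    smul_eq_mul, mul_one, measureReal_def]

lemma inner_eval (F : Measure ℝ) [IsProbabilityMeasure F] (t c : ℝ) (hc : c ^ 2 = c) :
    ∫ y, (c - ind y t) ^ 2 ∂F = c - (2 * c - 1) * (F (Set.Iic t)).toReal := by
  have h : ∀ y, (c - ind y t) ^ 2 = c ^ 2 - (2 * c - 1) * ind y t := fun y => by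
    have hu := ind_sq y t; nlinarith [hu]
  simp_rw [h]
  rw [integral_sub (integrable_const _) ((integrable_ind F t).const_mul _),
    integral_const_mul, integral_ind, integral_const, probReal_univ,
    one_smul, hc]

lemma double_eval (F : Measure ℝ) [IsProbabilityMeasure F] (t : ℝ) :
    ∫ y, ∫ y', (ind y t - ind y' t) ^ 2 ∂F ∂F
      = 2 * (F (Set.Iic t)).toReal - 2 * (F (Set.Iic t)).toReal ^ 2 := by
  set H := (F (Set.Iic t)).toReal with hH
  have h1 : ∀ y, (∫ y', (ind y t - ind y' t) ^ 2 ∂F) = (1 - 2 * H) * ind y t + H := fun y => by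
    rw [inner_eval F t (ind y t) (ind_sq y t)]; ring
  simp_rw [h1]
  rw [integral_add ((integrable_ind F t).const_mul _) (integrable_const _),
    integral_const_mul, integral_ind, integral_const, probReal_univ,
    one_smul]
  ring

lemma sum_sq_diff {n : ℕ} (c : Fin n → ℝ) (hc : ∀ i, c i ^ 2 = c i) :
    ∑ i, ∑ j, (c i - c j) ^ 2 = 2 * n * (∑ i, c i) - 2 * (∑ i, c i) ^ 2 := by
  have h : ∀ i j, (c i - c j) ^ 2 = c i + c j - 2 * (c i * c j) := fun i j => by
    have := hc i; have := hc j; nlinarith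
  have hrow : ∀ i, ∑ j, (c i + c j - 2 * (c i * c j))
      = n * c i + (∑ j, c j) - 2 * (c i * ∑ j, c j) := fun i => by
    rw [Finset.sum_sub_distrib, Finset.sum_add_distrib, Finset.sum_const, Finset.card_univ,
      Fintype.card_fin, nsmul_eq_mul, ← Finset.mul_sum, ← Finset.mul_sum]
  simp_rw [h, hrow]
  rw [Finset.sum_sub_distrib, Finset.sum_add_distrib, ← Finset.mul_sum, ← Finset.mul_sum,
    ← Finset.sum_mul, Finset.sum_const, Finset.card_univ, Fintype.card_fin, nsmul_eq_mul]
  ring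

lemma sum_ind {n : ℕ} (x : Fin n → ℝ) (t : ℝ) :
    ∑ i, ind (x i) t = ((Finset.univ.filter (fun i => x i ≤ t)).card : ℝ) := by
  unfold ind
  rw [Finset.sum_boole]

lemma energy_key (F : Measure ℝ) [IsProbabilityMeasure F]
    (hmean : Integrable (fun y => |y|) F) {n : ℕ} (hn : 0 < n) (x : Fin n → ℝ) :
    energyDistE F x = 2 * ∫ t, (edf x t - (F (Set.Iic t)).toReal) ^ 2 := by
  have hn0 : (n : ℝ) ≠ 0 := Nat.cast_ne_zero.2 hn.ne'
  have hAint : ∀ i : Fin n, Integrable (fun t => ∫ y, (ind (x i) t - ind y t) ^ 2 ∂F) :=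
    fun i => (integrable_prod_A F hmean (x i)).integral_prod_right
  have hBint : ∀ i j : Fin n, Integrable (fun t => (ind (x i) t - ind (x j) t) ^ 2) :=
    fun i j => integrable_sq_diff_ind _ _
  have hCpt : (fun t => ∫ y, ∫ y', (ind y t - ind y' t) ^ 2 ∂F ∂F)
      = fun t => ∫ p, (ind p.1 t - ind p.2 t) ^ 2 ∂(F.prod F) :=
    funext fun t => (integral_prod _ (integrable_sq_diff_prod F t)).symm
  have hCint : Integrable (fun t => ∫ y, ∫ y', (ind y t - ind y' t) ^ 2 ∂F ∂F) := by
    rw [hCpt]; exact (integrable_prod_C F hmean).integral_prod_right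
  have e1 : ∑ i, ∫ y, |x i - y| ∂F
      = ∫ t, ∑ i, ∫ y, (ind (x i) t - ind y t) ^ 2 ∂F := by
    rw [integral_finset_sum Finset.univ (fun i _ => hAint i)]
    exact Finset.sum_congr rfl fun i _ => swap_A F hmean (x i)
  have e2 : ∑ i, ∑ j, |x i - x j|
      = ∫ t, ∑ i, ∑ j, (ind (x i) t - ind (x j) t) ^ 2 := by
    rw [integral_finset_sum Finset.univ
      (fun i _ => integrable_finset_sum Finset.univ (fun j _ => hBint i j))]
    refine Finset.sum_congr rfl fun i _ => ?_
    rw [integral_finset_sum Finset.univ (fun j _ => hBint i j)]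
    exact Finset.sum_congr rfl fun j _ => (integral_sq_diff_ind _ _).symm
  have e3 := swap_C F hmean
  have hint1 : Integrable (fun t => (2 / (n:ℝ)) * ∑ i, ∫ y, (ind (x i) t - ind y t) ^ 2 ∂F) :=
    (integrable_finset_sum Finset.univ (fun i _ => hAint i)).const_mul _
  have hint2 : Integrable
      (fun t => (1 / (n:ℝ) ^ 2) * ∑ i, ∑ j, (ind (x i) t - ind (x j) t) ^ 2) :=
    (integrable_finset_sum Finset.univ
      (fun i _ => integrable_finset_sum Finset.univ (fun j _ => hBint i j))).const_mul _
  have hint12 : Integrable (fun t =>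
      (2 / (n:ℝ)) * ∑ i, ∫ y, (ind (x i) t - ind y t) ^ 2 ∂F
        - (1 / (n:ℝ) ^ 2) * ∑ i, ∑ j, (ind (x i) t - ind (x j) t) ^ 2) := hint1.sub hint2
  rw [energyDistE, e1, e2, e3, ← integral_const_mul, ← integral_const_mul, ← integral_const_mul,
    ← integral_sub hint1 hint2, ← integral_sub hint12 hCint]
  refine integral_congr_ae (Filter.Eventually.of_forall fun t => ?_)
  set H := (F (Set.Iic t)).toReal with hHdef
  have hA : ∀ i : Fin n, ∫ y, (ind (x i) t - ind y t) ^ 2 ∂F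
      = ind (x i) t - (2 * ind (x i) t - 1) * H := fun i => inner_eval F t _ (ind_sq _ _)
  have hB := sum_sq_diff (fun i => ind (x i) t) (fun i => ind_sq _ _)
  have hC := double_eval F t
  simp only [hA]
  rw [hB, ← hHdef, hC]
  have hsum : ∑ i, (ind (x i) t - (2 * ind (x i) t - 1) * H)
      = (∑ i, ind (x i) t) - (2 * (∑ i, ind (x i) t) - n) * H := by
    rw [Finset.sum_sub_distrib, ← Finset.sum_mul, Finset.sum_sub_distrib, ← Finset.mul_sum,
      Finset.sum_const, Finset.card_univ, Fintype.card_fin, nsmul_eq_mul, mul_one]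
  have hS : ∑ i, ind (x i) t = n * edf x t := by
    rw [sum_ind, edf]; field_simp
  rw [hsum, hS]
  field_simp
  ring

/-- for a continuous univariate distribution `F` with finite mean,
`E(F,F_n) = 2·D₂(F,F_n)²`, and consequently a point set minimizes the energy
distance over all `n`-point sets iff it minimizes the `L₂`-discrepancy. -/
theorem energyDistE_eq_two_mul_sq_L2disc (F : Measure ℝ) [IsProbabilityMeasure F]
    (hcont : ∀ t : ℝ, F {t} = 0) (hmean : Integrable (fun y => |y|) F)
    (n : ℕ) (hn : 0 < n) :
    (∀ x : Fin n → ℝ, energyDistE F x = 2 * (L2disc F x) ^ 2) ∧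
    (∀ ξ : Fin n → ℝ,
      (∀ x : Fin n → ℝ, energyDistE F ξ ≤ energyDistE F x) ↔
      (∀ x : Fin n → ℝ, L2disc F ξ ≤ L2disc F x)) := by
  have hnn : ∀ x : Fin n → ℝ, 0 ≤ L2disc F x := fun x => Real.sqrt_nonneg _
  have key : ∀ x : Fin n → ℝ, energyDistE F x = 2 * (L2disc F x) ^ 2 := by
    intro x
    have h1 := energy_key F hmean hn x
    rw [L2disc, Real.sq_sqrt (integral_nonneg fun t => by positivity)]
    simpa only [sq_abs] using h1
  refine ⟨key, fun ξ => ?_⟩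
  have h2 : ∀ a b : ℝ, 0 ≤ a → 0 ≤ b → (2 * a ^ 2 ≤ 2 * b ^ 2 ↔ a ≤ b) := fun a b ha hb => by
    rw [mul_le_mul_iff_right₀ (by norm_num : (0:ℝ) < 2), pow_le_pow_iff_left₀ ha hb two_ne_zero]
  constructor
  · intro h x
    have hx := h x
    rw [key, key] at hx
    exact (h2 _ _ (hnn ξ) (hnn x)).1 hx
  · intro h x
    rw [key, key]
    exact (h2 _ _ (hnn ξ) (hnn x)).2 (h x)
end

section
/- The function Φ(x) = −‖x‖₂ on ℝ^p is conditionally positive definite of order 1: for any pairwise distinct points x_1,…,x_N ∈ ℝ^p and any nonzero vector ζ ∈ ℝ^N with Σ_{j=1}^N ζ_j = 0, the quadratic form −Σ_{j=1}^N Σ_{k=1}^N ζ_j ζ_k ‖x_j − x_k‖₂ is strictly positive. -/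
open Finset MeasureTheory Set

noncomputable def g₀ (c : ℝ) : ℝ → ℝ := fun s => (1 - Real.exp (-(s * c))) * s ^ (-(3:ℝ)/2)

lemma g₀_contOn (c : ℝ) : ContinuousOn (g₀ c) (Ioi 0) := by
  apply ContinuousOn.mul
  · exact (Continuous.continuousOn (by continuity))
  · exact ContinuousOn.rpow_const continuousOn_id (fun s hs => Or.inl (ne_of_gt hs))

lemma g₀_nonneg {c s : ℝ} (hc : 0 ≤ c) (hs : 0 < s) : 0 ≤ g₀ c s := by
  apply mul_nonneg
  · simp only [sub_nonneg]
    exact Real.exp_le_one_iff.mpr (by nlinarith)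
  · exact (Real.rpow_pos_of_pos hs _).le

lemma g₀_pos {c s : ℝ} (hc : 0 < c) (hs : 0 < s) : 0 < g₀ c s := by
  apply mul_pos
  · simp only [sub_pos]
    apply Real.exp_lt_one_iff.mpr (by nlinarith)
  · exact Real.rpow_pos_of_pos hs _

lemma g₀_integrable (c : ℝ) (hc : 0 ≤ c) : IntegrableOn (g₀ c) (Ioi 0) := by
  rw [← Set.Ioc_union_Ioi_eq_Ioi (zero_le_one)]
  apply IntegrableOn.union
  · -- on Ioc 0 1
    have hdom : IntegrableOn (fun s : ℝ => c * s ^ (-(1:ℝ)/2)) (Ioc 0 1) := by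
      apply Integrable.const_mul
      have := (intervalIntegral.intervalIntegrable_rpow' (a := 0) (b := 1)
        (r := -(1:ℝ)/2) (by norm_num))
      rwa [intervalIntegrable_iff_integrableOn_Ioc_of_le zero_le_one] at this
    apply Integrable.mono' hdom
      (((g₀_contOn c).mono Ioc_subset_Ioi_self).aestronglyMeasurable measurableSet_Ioc)
    filter_upwards [ae_restrict_mem measurableSet_Ioc] with s hs
    obtain ⟨hs0, hs1⟩ := hs
    rw [Real.norm_eq_abs, abs_of_nonneg (g₀_nonneg hc hs0)]
    have h1 : 1 - Real.exp (-(s * c)) ≤ s * c := by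
      have := Real.add_one_le_exp (-(s * c)); linarith
    have hr : (0:ℝ) < s ^ (-(3:ℝ)/2) := Real.rpow_pos_of_pos hs0 _
    calc (1 - Real.exp (-(s * c))) * s ^ (-(3:ℝ)/2)
        ≤ (s * c) * s ^ (-(3:ℝ)/2) := by nlinarith
      _ = c * (s ^ (1:ℝ) * s ^ (-(3:ℝ)/2)) := by rw [Real.rpow_one]; ring
      _ = c * s ^ (-(1:ℝ)/2) := by rw [← Real.rpow_add hs0]; norm_num
  · -- on Ioi 1
    have hdom : IntegrableOn (fun s : ℝ => s ^ (-(3:ℝ)/2)) (Ioi 1) :=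
      integrableOn_Ioi_rpow_of_lt (by norm_num) one_pos
    apply Integrable.mono' hdom
      (((g₀_contOn c).mono (Ioi_subset_Ioi zero_le_one)).aestronglyMeasurable measurableSet_Ioi)
    filter_upwards [ae_restrict_mem measurableSet_Ioi] with s hs
    have hs0 : (0:ℝ) < s := lt_trans one_pos hs
    rw [Real.norm_eq_abs, abs_of_nonneg (g₀_nonneg hc hs0)]
    have hr : (0:ℝ) < s ^ (-(3:ℝ)/2) := Real.rpow_pos_of_pos hs0 _
    have h1 : 1 - Real.exp (-(s * c)) ≤ 1 := by
      have := Real.exp_pos (-(s * c)); linarith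
    simp only [g₀]
    nlinarith

noncomputable def C₀ : ℝ := ∫ s in Ioi (0:ℝ), g₀ 1 s

lemma C₀_pos : 0 < C₀ := by
  rw [C₀, setIntegral_pos_iff_support_of_nonneg_ae]
  · apply lt_of_lt_of_le (b := volume (Ioi (0:ℝ)))
    · rw [Real.volume_Ioi]; simp
    · apply measure_mono
      intro s hs
      exact ⟨ne_of_gt (g₀_pos one_pos hs), hs⟩
  · filter_upwards [ae_restrict_mem measurableSet_Ioi] with s hs
    exact g₀_nonneg zero_le_one hs
  · exact g₀_integrable 1 zero_le_one

lemma g₀_integral (a : ℝ) (ha : 0 ≤ a) :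
    ∫ s in Ioi (0:ℝ), g₀ (a ^ 2) s = C₀ * a := by
  rcases eq_or_lt_of_le ha with h | h
  · simp [g₀, ← h]
  · have hc : (0:ℝ) < a ^ 2 := by positivity
    have key := integral_comp_mul_left_Ioi (g₀ 1) 0 hc
    rw [mul_zero] at key
    have congr1 : ∫ s in Ioi (0:ℝ), g₀ (a ^ 2) s
        = ∫ s in Ioi (0:ℝ), (a ^ 3) * g₀ 1 (a ^ 2 * s) := by
      apply setIntegral_congr_fun measurableSet_Ioi
      intro s hs
      simp only [g₀, mul_one]
      rw [Real.mul_rpow hc.le (le_of_lt hs)]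
      have h2 : (a ^ 2 : ℝ) ^ (-(3:ℝ)/2) = (a ^ 3)⁻¹ := by
        rw [← Real.rpow_natCast a 2, ← Real.rpow_mul ha, ← Real.rpow_natCast a 3,
          ← Real.rpow_neg ha]
        norm_num
      rw [h2, show a ^ 2 * s = s * a ^ 2 by ring]
      have h3 : (a:ℝ) ^ 3 ≠ 0 := by positivity
      field_simp
    rw [congr1, integral_const_mul, key, smul_eq_mul]
    have : (a:ℝ) ^ 3 * ((a ^ 2)⁻¹ * ∫ s in Ioi (0:ℝ), g₀ 1 s) = C₀ * a := by
      rw [C₀]; field_simp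
    rw [this]

lemma sum_sq_eq_norm_sq {p : ℕ} (y : EuclideanSpace ℝ (Fin p)) :
    ∑ i, y i ^ 2 = ‖y‖ ^ 2 := by
  rw [EuclideanSpace.norm_eq, Real.sq_sqrt (by positivity)]
  apply Finset.sum_congr rfl
  intro i _
  rw [Real.norm_eq_abs, sq_abs]

lemma exists_pos_term {p N : ℕ} (x : Fin N → EuclideanSpace ℝ (Fin p)) (hx : Function.Injective x)
    (η : Fin N → ℝ) (j0 : Fin N) (hη : η j0 ≠ 0)
    (h1 : ∀ (n : ℕ) (f : Fin n → Fin p), ∑ j, η j * ∏ l, x j (f l) = 0) : False := by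
  classical
  have hsub : ∀ (y z : EuclideanSpace ℝ (Fin p)) (i : Fin p), (y - z) i = y i - z i :=
    fun _ _ _ => rfl
  -- step 2 : lists
  have h2 : ∀ (L : List (Fin p)), ∑ j, η j * (L.map (fun i => x j i)).prod = 0 := by
    intro L
    have h := h1 L.length L.get
    rw [← h]
    refine Finset.sum_congr rfl fun j _ => ?_
    congr 1
    conv_lhs => rw [← List.ofFn_get L]
    rw [List.map_ofFn, List.prod_ofFn]
    rfl
  -- step 3 : mixed products of linear functionals
  have h3 : ∀ (t : Finset (Fin N)) (v : Fin N → EuclideanSpace ℝ (Fin p)),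
      ∑ j, η j * ∏ k ∈ t, (∑ i, v k i * x j i) = 0 := by
    intro t v
    have expand : ∀ j, ∏ k ∈ t, (∑ i, v k i * x j i)
        = ∑ g ∈ t.pi (fun _ => (univ : Finset (Fin p))),
            (∏ a ∈ t.attach, v a.1 (g a.1 a.2)) * ∏ a ∈ t.attach, x j (g a.1 a.2) := by
      intro j
      rw [Finset.prod_sum]
      exact Finset.sum_congr rfl fun g _ => by rw [← Finset.prod_mul_distrib]
    simp_rw [expand, Finset.mul_sum]
    rw [Finset.sum_comm]
    apply Finset.sum_eq_zero
    intro g _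
    have hre : ∀ j, η j * ((∏ a ∈ t.attach, v a.1 (g a.1 a.2)) * ∏ a ∈ t.attach, x j (g a.1 a.2))
        = (∏ a ∈ t.attach, v a.1 (g a.1 a.2)) * (η j * ∏ a ∈ t.attach, x j (g a.1 a.2)) :=
      fun j => by ring
    simp_rw [hre, ← Finset.mul_sum]
    apply mul_eq_zero_of_right
    have h := h2 (t.attach.toList.map (fun a => g a.1 a.2))
    rw [← h]
    refine Finset.sum_congr rfl fun j _ => ?_
    congr 1
    rw [List.map_map, Finset.prod_map_toList]
    rfl
  -- step 4 : interpolation polynomial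
  set t : Finset (Fin N) := Finset.univ.erase j0 with ht
  set v : Fin N → EuclideanSpace ℝ (Fin p) := fun k => x j0 - x k with hv
  set c : Fin N → ℝ := fun k => -∑ i, v k i * x k i with hc
  have key : ∑ j, η j * ∏ k ∈ t, ((∑ i, v k i * x j i) + c k) = 0 := by
    have : ∀ j, ∏ k ∈ t, ((∑ i, v k i * x j i) + c k)
        = ∑ u ∈ t.powerset, (∏ k ∈ u, (∑ i, v k i * x j i)) * ∏ k ∈ t \ u, c k :=
      fun j => Finset.prod_add _ _ _
    simp_rw [this, Finset.mul_sum]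
    rw [Finset.sum_comm]
    apply Finset.sum_eq_zero
    intro u _
    have hre : ∀ j, η j * ((∏ k ∈ u, (∑ i, v k i * x j i)) * ∏ k ∈ t \ u, c k)
        = (∏ k ∈ t \ u, c k) * (η j * ∏ k ∈ u, (∑ i, v k i * x j i)) := fun j => by ring
    simp_rw [hre, ← Finset.mul_sum, h3 u v, mul_zero]
  rw [Finset.sum_eq_single j0] at key
  · -- the j0 term is nonzero
    have hpos : 0 < ∏ k ∈ t, ((∑ i, v k i * x j0 i) + c k) := by
      apply Finset.prod_pos
      intro k hk
      have hne : x j0 - x k ≠ 0 := by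
        rw [sub_ne_zero]
        exact fun hcon => (Finset.mem_erase.mp hk).1 (hx hcon).symm
      have heq : (∑ i, v k i * x j0 i) + c k = ∑ i, ((x j0 - x k) i) ^ 2 := by
        simp only [hc]
        rw [← sub_eq_add_neg, ← Finset.sum_sub_distrib]
        refine Finset.sum_congr rfl fun i _ => ?_
        simp only [hv, hsub]
        ring
      rw [heq, sum_sq_eq_norm_sq]
      have := norm_pos_iff.mpr hne
      positivity
    exact hη ((mul_eq_zero.mp key).resolve_right (ne_of_gt hpos))
  · intro j _ hj
    apply mul_eq_zero_of_right
    apply Finset.prod_eq_zero (Finset.mem_erase.mpr ⟨hj, Finset.mem_univ j⟩)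
    rw [hc]
    simp
  · intro h; exact absurd (Finset.mem_univ j0) h

lemma gauss_spd {p N : ℕ} (x : Fin N → EuclideanSpace ℝ (Fin p)) (hx : Function.Injective x)
    (ζ : Fin N → ℝ) (hζ : ζ ≠ 0) {s : ℝ} (hs : 0 < s) :
    0 < ∑ j, ∑ k, ζ j * ζ k * Real.exp (-(s * ‖x j - x k‖ ^ 2)) := by
  classical
  have hsub : ∀ (y z : EuclideanSpace ℝ (Fin p)) (i : Fin p), (y - z) i = y i - z i :=
    fun _ _ _ => rfl
  set η : Fin N → ℝ := fun j => ζ j * Real.exp (-(s * ∑ i, x j i ^ 2)) with hη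
  set S : Fin N → Fin N → ℝ := fun j k => ∑ i, x j i * x k i with hS
  set F : Fin N → Fin N → ℕ → ℝ :=
    fun j k n => η j * η k * ((2 * s) ^ n / n.factorial * S j k ^ n) with hF
  have hterm : ∀ j k, ζ j * ζ k * Real.exp (-(s * ‖x j - x k‖ ^ 2)) = ∑' n : ℕ, F j k n := by
    intro j k
    have hnorm : ‖x j - x k‖ ^ 2 = (∑ i, x j i ^ 2) + (∑ i, x k i ^ 2) - 2 * S j k := by
      rw [← sum_sq_eq_norm_sq, hS]
      rw [Finset.mul_sum, ← Finset.sum_add_distrib, ← Finset.sum_sub_distrib]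
      refine Finset.sum_congr rfl fun i _ => ?_
      rw [hsub]
      ring
    have hexp : Real.exp (-(s * ‖x j - x k‖ ^ 2))
        = Real.exp (-(s * ∑ i, x j i ^ 2)) * Real.exp (-(s * ∑ i, x k i ^ 2))
          * Real.exp (2 * s * S j k) := by
      rw [← Real.exp_add, ← Real.exp_add, hnorm]
      ring_nf
    have hseries : Real.exp (2 * s * S j k) = ∑' n : ℕ, (2 * s * S j k) ^ n / n.factorial := by
      rw [Real.exp_eq_exp_ℝ, NormedSpace.exp_eq_tsum_div]
    rw [hexp, hseries, ← tsum_mul_left, ← tsum_mul_left]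
    apply tsum_congr
    intro n
    simp only [hF, hη]
    rw [mul_pow]
    ring
  have hsumm : ∀ j k, Summable (F j k) := by
    intro j k
    apply Summable.mul_left
    have : (fun n : ℕ => (2 * s) ^ n / n.factorial * S j k ^ n)
         = fun n => (2 * s * S j k) ^ n / n.factorial := by
      funext n; rw [mul_pow]; ring
    rw [this]
    exact Real.summable_pow_div_factorial _
  have hswap : ∑ j, ∑ k, ζ j * ζ k * Real.exp (-(s * ‖x j - x k‖ ^ 2))
      = ∑' n : ℕ, ∑ j, ∑ k, F j k n := by
    simp_rw [hterm]
    rw [show (∑ j, ∑ k, ∑' n : ℕ, F j k n) = ∑ j, ∑' n : ℕ, ∑ k, F j k n from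
      Finset.sum_congr rfl fun j _ => (Summable.tsum_finsetSum (fun k _ => hsumm j k)).symm,
      ← Summable.tsum_finsetSum (fun j _ => summable_sum (fun k _ => hsumm j k))]
  rw [hswap]
  -- the expansion of each coefficient as a sum of squares
  have hG : ∀ n : ℕ, ∑ j, ∑ k, F j k n
      = (2 * s) ^ n / n.factorial *
        ∑ f ∈ Fintype.piFinset (fun _ : Fin n => (univ : Finset (Fin p))),
          (∑ j, η j * ∏ l, x j (f l)) ^ 2 := by
    intro n
    set c : ℝ := (2 * s) ^ n / n.factorial with hc
    set P := Fintype.piFinset (fun _ : Fin n => (univ : Finset (Fin p))) with hP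
    have hpow : ∀ j k : Fin N, S j k ^ n
        = ∑ f ∈ P, (∏ l, x j (f l)) * (∏ l, x k (f l)) := by
      intro j k
      rw [hS]
      rw [Finset.sum_pow' univ (fun i => x j i * x k i) n]
      exact Finset.sum_congr rfl fun f _ => Finset.prod_mul_distrib
    calc ∑ j, ∑ k, F j k n
        = ∑ j, ∑ k, ∑ f ∈ P, c * ((η j * ∏ l, x j (f l)) * (η k * ∏ l, x k (f l))) := by
          refine Finset.sum_congr rfl fun j _ => Finset.sum_congr rfl fun k _ => ?_
          simp only [hF]
          rw [hpow j k, Finset.mul_sum, Finset.mul_sum]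
          exact Finset.sum_congr rfl fun f _ => by ring
      _ = ∑ j, ∑ f ∈ P, ∑ k, c * ((η j * ∏ l, x j (f l)) * (η k * ∏ l, x k (f l))) :=
          Finset.sum_congr rfl fun j _ => Finset.sum_comm
      _ = ∑ f ∈ P, ∑ j, ∑ k, c * ((η j * ∏ l, x j (f l)) * (η k * ∏ l, x k (f l))) :=
          Finset.sum_comm
      _ = c * ∑ f ∈ P, (∑ j, η j * ∏ l, x j (f l)) ^ 2 := by
          rw [Finset.mul_sum]
          refine Finset.sum_congr rfl fun f _ => ?_
          rw [sq, Finset.sum_mul_sum, Finset.mul_sum]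
          refine Finset.sum_congr rfl fun j _ => ?_
          rw [Finset.mul_sum]
  have hnonneg : ∀ n : ℕ, 0 ≤ ∑ j, ∑ k, F j k n := by
    intro n
    rw [hG n]
    have h1 : (0:ℝ) ≤ (2 * s) ^ n / n.factorial := by positivity
    have h2 : (0:ℝ) ≤ ∑ f ∈ Fintype.piFinset (fun _ : Fin n => (univ : Finset (Fin p))),
        (∑ j, η j * ∏ l, x j (f l)) ^ 2 := Finset.sum_nonneg fun f _ => sq_nonneg _
    positivity
  have hex : ∃ n : ℕ, 0 < ∑ j, ∑ k, F j k n := by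
    by_contra hcon
    push_neg at hcon
    have hzero : ∀ n : ℕ, ∑ j, ∑ k, F j k n = 0 :=
      fun n => le_antisymm (hcon n) (hnonneg n)
    have h1 : ∀ (n : ℕ) (f : Fin n → Fin p), ∑ j, η j * ∏ l, x j (f l) = 0 := by
      intro n f
      have h := hzero n
      rw [hG n] at h
      have hcpos : (0:ℝ) < (2 * s) ^ n / n.factorial := by positivity
      have hsum0 : ∑ f ∈ Fintype.piFinset (fun _ : Fin n => (univ : Finset (Fin p))),
          (∑ j, η j * ∏ l, x j (f l)) ^ 2 = 0 := by
        rcases mul_eq_zero.mp h with h' | h'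
        · exact absurd h' (ne_of_gt hcpos)
        · exact h'
      have := (Finset.sum_eq_zero_iff_of_nonneg (fun f _ => sq_nonneg _)).mp hsum0 f
        (Fintype.mem_piFinset.mpr fun _ => Finset.mem_univ _)
      exact pow_eq_zero_iff two_ne_zero |>.mp this
    obtain ⟨j0, hj0⟩ := Function.ne_iff.mp hζ
    have hηj0 : η j0 ≠ 0 := mul_ne_zero hj0 (Real.exp_ne_zero _)
    exact exists_pos_term x hx η j0 hηj0 h1
  obtain ⟨n0, hn0⟩ := hex
  exact Summable.tsum_pos (summable_sum (fun j _ => summable_sum (fun k _ => hsumm j k))) hnonneg n0 hn0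


/-- the function `Φ(x) = −‖x‖₂` on `ℝ^p` is conditionally positive
definite of order 1: for pairwise distinct points `x_1, …, x_N` and any nonzero
vector `ζ` with `Σⱼ ζⱼ = 0`, the quadratic form
`Σⱼ Σₖ ζⱼ ζₖ Φ(xⱼ − xₖ) = −Σⱼ Σₖ ζⱼ ζₖ ‖xⱼ − xₖ‖₂` is strictly positive. -/
theorem neg_norm_cond_pos_def {p N : ℕ}
    (x : Fin N → EuclideanSpace ℝ (Fin p)) (hx : Function.Injective x)
    (ζ : Fin N → ℝ) (hζ : ζ ≠ 0) (hsum : ∑ j, ζ j = 0) :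
    0 < -∑ j, ∑ k, ζ j * ζ k * ‖x j - x k‖ := by
  classical
  set φ : Fin N → Fin N → ℝ → ℝ := fun j k s =>
    ζ j * ζ k * ((1 - Real.exp (-(s * ‖x j - x k‖ ^ 2))) * s ^ (-(3:ℝ)/2)) with hφ
  set K : ℝ → ℝ := fun s => ∑ j, ∑ k, ζ j * ζ k * Real.exp (-(s * ‖x j - x k‖ ^ 2)) with hK
  have hφ_eq : ∀ j k, φ j k = fun s => ζ j * ζ k * g₀ (‖x j - x k‖ ^ 2) s := by
    intro j k
    funext s
    simp only [hφ, g₀]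
  have hφ_int : ∀ j k : Fin N, IntegrableOn (φ j k) (Ioi 0) := by
    intro j k
    rw [hφ_eq]
    exact (g₀_integrable _ (by positivity)).const_mul _
  have hφ_val : ∀ j k : Fin N, ∫ s in Ioi (0:ℝ), φ j k s
      = C₀ * (ζ j * ζ k * ‖x j - x k‖) := by
    intro j k
    rw [hφ_eq]
    simp only []
    rw [integral_const_mul, g₀_integral _ (norm_nonneg _)]
    ring
  have htot : ∫ s in Ioi (0:ℝ), (∑ j, ∑ k, φ j k s)
      = C₀ * ∑ j, ∑ k, ζ j * ζ k * ‖x j - x k‖ := by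
    rw [integral_finset_sum _ (fun j _ => integrable_finset_sum _ (fun k _ => hφ_int j k))]
    rw [Finset.mul_sum]
    refine Finset.sum_congr rfl fun j _ => ?_
    rw [integral_finset_sum _ (fun k _ => hφ_int j k), Finset.mul_sum]
    exact Finset.sum_congr rfl fun k _ => hφ_val j k
  have hpt : ∀ s : ℝ, (∑ j, ∑ k, φ j k s) = -(K s * s ^ (-(3:ℝ)/2)) := by
    intro s
    have e1 : (∑ j, ∑ k, φ j k s)
        = ((∑ j, ζ j) * (∑ k, ζ k) - K s) * s ^ (-(3:ℝ)/2) := by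
      rw [Finset.sum_mul_sum, hK, ← Finset.sum_sub_distrib, Finset.sum_mul]
      refine Finset.sum_congr rfl fun j _ => ?_
      rw [← Finset.sum_sub_distrib, Finset.sum_mul]
      refine Finset.sum_congr rfl fun k _ => ?_
      simp only [hφ]
      ring
    rw [e1, hsum]
    ring
  have hKint : IntegrableOn (fun s => K s * s ^ (-(3:ℝ)/2)) (Ioi 0) := by
    have h0 : IntegrableOn (fun s => ∑ j, ∑ k, φ j k s) (Ioi 0) :=
      integrable_finset_sum _ (fun j _ => integrable_finset_sum _ (fun k _ => hφ_int j k))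
    refine IntegrableOn.congr_fun h0.neg (fun s _ => ?_) measurableSet_Ioi
    simp only [Pi.neg_apply, hpt s, neg_neg]
  have hKval : ∫ s in Ioi (0:ℝ), K s * s ^ (-(3:ℝ)/2)
      = C₀ * (-∑ j, ∑ k, ζ j * ζ k * ‖x j - x k‖) := by
    have e2 : ∫ s in Ioi (0:ℝ), (∑ j, ∑ k, φ j k s)
        = ∫ s in Ioi (0:ℝ), -(K s * s ^ (-(3:ℝ)/2)) := by
      exact setIntegral_congr_fun measurableSet_Ioi (fun s _ => hpt s)
    rw [integral_neg] at e2
    have := htot ▸ e2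
    linarith [this]
  have hKpos : 0 < ∫ s in Ioi (0:ℝ), K s * s ^ (-(3:ℝ)/2) := by
    rw [setIntegral_pos_iff_support_of_nonneg_ae]
    · apply lt_of_lt_of_le (b := volume (Ioi (0:ℝ)))
      · rw [Real.volume_Ioi]; simp
      · apply measure_mono
        intro s hs
        have h1 : 0 < K s := gauss_spd x hx ζ hζ hs
        have h2 : (0:ℝ) < s ^ (-(3:ℝ)/2) := Real.rpow_pos_of_pos hs _
        exact ⟨ne_of_gt (mul_pos h1 h2), hs⟩
    · filter_upwards [ae_restrict_mem measurableSet_Ioi] with s hs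
      have h1 : 0 < K s := gauss_spd x hx ζ hζ hs
      have h2 : (0:ℝ) < s ^ (-(3:ℝ)/2) := Real.rpow_pos_of_pos hs _
      positivity
    · exact hKint
  rw [hKval] at hKpos
  nlinarith [C₀_pos, hKpos]
end

section
/- Let (χ_k²)_{k≥1} be i.i.d. chi-squared random variables with 1 degree of freedom, and let (λ_k)_{k≥1} be a nonincreasing sequence of nonnegative reals with Σ_{k=1}^∞ λ_k^{1/α} < ∞ for some α > 1. Set W_∞ = Σ_{k=1}^∞ λ_k χ_k² and d = α·(2c)^{1/α}·Σ_{k=1}^∞ λ_k^{1/α}, where c = 2^α·b^{α/(α−1)} and b = α·2^{1/α−1}·Σ_{k=1}^∞ λ_k^{1/α}. Then there exists x₀ > 0 such that for all 0 < x ≤ x₀, P(W_∞ ≤ x) ≥ (1/4)·exp{−d·x^{−1/(α−1)}}. -/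
open MeasureTheory ProbabilityTheory Filter
open scoped NNReal ENNReal

lemma aux_one_add_le {α : ℝ} (hα : 1 ≤ α) {u : ℝ} (hu : 0 ≤ u) :
    1 + u ≤ Real.exp (α * u ^ (1 / α)) := by
  have hα0 : (0:ℝ) < α := lt_of_lt_of_le one_pos hα
  set v := u ^ (1/α) with hv
  have hv0 : 0 ≤ v := Real.rpow_nonneg hu _
  have huv : u = v ^ α := by
    rw [hv, ← Real.rpow_mul hu, one_div, inv_mul_cancel₀ hα0.ne', Real.rpow_one]
  have h1 : 1 + u ≤ (1 + v) ^ α := by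
    have h := NNReal.add_rpow_le_rpow_add (1 : ℝ≥0) v.toNNReal hα
    have h' := (NNReal.coe_le_coe).2 h
    push_cast [NNReal.coe_rpow, Real.coe_toNNReal _ hv0] at h'
    simpa [huv] using h'
  have h2 : (1 + v) ^ α ≤ (Real.exp v) ^ α :=
    Real.rpow_le_rpow (by positivity) (by linarith [Real.add_one_le_exp v]) hα0.le
  have h3 : (Real.exp v) ^ α = Real.exp (α * v) := by
    rw [mul_comm, Real.exp_mul]
  linarith

lemma gauss_laplace {s : ℝ} (hs : 0 ≤ s) :
    ∫ u : ℝ, Real.exp (-(s * u ^ 2)) ∂(gaussianReal 0 1) = (Real.sqrt (1 + 2 * s))⁻¹ := by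
  have hpi := Real.pi_pos
  rw [gaussianReal_of_var_ne_zero 0 one_ne_zero]
  have hpdf : (gaussianPDF 0 1) = fun x => ((Real.toNNReal (gaussianPDFReal 0 1 x) : ℝ≥0) : ℝ≥0∞) := rfl
  rw [hpdf, integral_withDensity_eq_integral_smul
    ((measurable_gaussianPDFReal 0 1).real_toNNReal) _]
  have : ∀ x : ℝ, (Real.toNNReal (gaussianPDFReal 0 1 x)) • Real.exp (-(s * x ^ 2))
      = (Real.sqrt (2 * Real.pi))⁻¹ * Real.exp (-(s + 1/2) * x ^ 2) := by
    intro x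
    rw [NNReal.smul_def, Real.coe_toNNReal _ (gaussianPDFReal_nonneg 0 1 x)]
    simp only [gaussianPDFReal, NNReal.coe_one, mul_one, sub_zero]
    rw [smul_eq_mul, mul_assoc, ← Real.exp_add]
    ring_nf
  simp_rw [this]
  rw [integral_const_mul, integral_gaussian]
  have hs2 : (0:ℝ) < s + 1/2 := by linarith
  rw [← Real.sqrt_inv, ← Real.sqrt_inv, ← Real.sqrt_mul (by positivity)]
  congr 1
  field_simp
  ring

lemma mgf_term {Ω : Type*} [MeasureSpace Ω] [IsProbabilityMeasure (ℙ : Measure Ω)]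
    {χ : Ω → ℝ} (hm : Measurable χ)
    (hlaw : Measure.map χ ℙ = Measure.map (fun u : ℝ => u ^ 2) (gaussianReal 0 1))
    {t lamk : ℝ} (ht : 0 ≤ t) (hl : 0 ≤ lamk) :
    mgf (fun ω => lamk * χ ω) ℙ (-t) = (Real.sqrt (1 + 2 * (t * lamk)))⁻¹ := by
  have hg : Measurable fun y : ℝ => Real.exp (-t * (lamk * y)) := by fun_prop
  have h1 : mgf (fun ω => lamk * χ ω) ℙ (-t)
      = ∫ y, Real.exp (-t * (lamk * y)) ∂(Measure.map χ ℙ) := by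
    rw [integral_map hm.aemeasurable hg.aestronglyMeasurable]
    rfl
  rw [h1, hlaw, integral_map (by fun_prop) hg.aestronglyMeasurable]
  have : ∀ u : ℝ, Real.exp (-t * (lamk * u ^ 2)) = Real.exp (-((t * lamk) * u ^ 2)) := by
    intro u; ring_nf
  simp_rw [this]
  exact gauss_laplace (by positivity)

set_option maxHeartbeats 2000000 in
/-- lower bound on the left tail of `W_∞ = Σₖ λₖ χₖ²`, where the
`χₖ²` are i.i.d. chi-squared random variables with one degree of freedom (i.e.
squares of standard normals) and `(λₖ)` is nonincreasing, nonnegative, with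
`Σₖ λₖ^{1/α} < ∞` for some `α > 1`. With `b = α·2^{1/α−1}·Σₖ λₖ^{1/α}`,
`c = 2^α·b^{α/(α−1)}` and `d = α·(2c)^{1/α}·Σₖ λₖ^{1/α}`, there exists
`x₀ > 0` such that `P(W_∞ ≤ x) ≥ (1/4)·exp(−d·x^{−1/(α−1)})` for all
`0 < x ≤ x₀`. -/
theorem left_tail_lower_bound_weighted_chi_squared
    {Ω : Type*} [MeasureSpace Ω] [IsProbabilityMeasure (ℙ : Measure Ω)]
    (χ : ℕ → Ω → ℝ) (hmeas : ∀ k, Measurable (χ k))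
    (hindep : iIndepFun χ ℙ)
    (hlaw : ∀ k, Measure.map (χ k) ℙ
      = Measure.map (fun u : ℝ => u ^ 2) (gaussianReal 0 1))
    (lam : ℕ → ℝ) (hanti : Antitone lam) (hnonneg : ∀ k, 0 ≤ lam k)
    (α : ℝ) (hα : 1 < α)
    (hsum : Summable (fun k => lam k ^ (1 / α)))
    (S b c d : ℝ)
    (hS : S = ∑' k, lam k ^ (1 / α))
    (hb : b = α * 2 ^ (1 / α - 1) * S)
    (hc : c = 2 ^ α * b ^ (α / (α - 1)))
    (hd : d = α * (2 * c) ^ (1 / α) * S) :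
    ∃ x₀ > (0 : ℝ), ∀ x : ℝ, 0 < x → x ≤ x₀ →
      (1 / 4) * Real.exp (-d * x ^ (-1 / (α - 1)))
        ≤ (ℙ {ω | (∑' k, lam k * χ k ω) ≤ x}).toReal := by
  have hα0 : (0:ℝ) < α := by linarith
  have hα1 : (0:ℝ) < α - 1 := by linarith
  have hSnn : 0 ≤ S := hS ▸ tsum_nonneg (fun k => Real.rpow_nonneg (hnonneg k) _)
  rcases eq_or_lt_of_le hSnn with hS0 | hS0
  · -- degenerate case S = 0
    refine ⟨1, one_pos, fun x hx hx1 => ?_⟩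
    have hlam0 : ∀ k, lam k = 0 := by
      intro k
      have h1 : lam k ^ (1/α) ≤ S :=
        hS ▸ Summable.le_tsum hsum k (fun j _ => Real.rpow_nonneg (hnonneg j) _)
      have h2 : lam k ^ (1/α) = 0 :=
        le_antisymm (hS0 ▸ h1) (Real.rpow_nonneg (hnonneg k) _)
      exact ((Real.rpow_eq_zero_iff_of_nonneg (hnonneg k)).1 h2).1
    have hset : {ω : Ω | (∑' k, lam k * χ k ω) ≤ x} = Set.univ := by
      ext ω; simp [hlam0, hx.le]
    have hd0 : d = 0 := by rw [hd, ← hS0, mul_zero]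
    rw [hset, measure_univ, ENNReal.toReal_one, hd0]
    rw [neg_zero, zero_mul, Real.exp_zero]
    norm_num
  -- main case: S > 0
  have hb0 : 0 < b := by
    rw [hb]; positivity
  have hc0 : 0 < c := by
    rw [hc]
    have := Real.rpow_pos_of_pos hb0 (α / (α - 1))
    positivity
  have h2α : (2:ℝ) < 2 ^ α := by
    calc (2:ℝ) = 2 ^ (1:ℝ) := (Real.rpow_one 2).symm
    _ < 2 ^ α := Real.rpow_lt_rpow_of_exponent_lt one_lt_two hα
  have hbr0 : 0 < b ^ (α / (α - 1)) := Real.rpow_pos_of_pos hb0 _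
  have hd2 : d = 4 * b ^ (α / (α - 1)) := by
    have h2c : (2 * c) ^ (1/α) = 2 ^ (1/α) * c ^ (1/α) :=
      Real.mul_rpow (by norm_num) hc0.le
    have hcα : c ^ (1/α) = 2 * b ^ (1/(α-1)) := by
      rw [hc, Real.mul_rpow (by positivity) hbr0.le,
        ← Real.rpow_mul (by norm_num : (0:ℝ) ≤ 2),
        ← Real.rpow_mul hb0.le]
      rw [mul_one_div_cancel hα0.ne', Real.rpow_one]
      have : α / (α - 1) * (1/α) = 1/(α-1) := by
        field_simp
      rw [this]
    have hαS : α * S = b * 2 ^ (1 - 1/α) := by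
      rw [hb]
      have h22 : (2:ℝ) ^ ((1:ℝ)/α - 1) * 2 ^ (1 - 1/α) = 1 := by
        rw [← Real.rpow_add two_pos]
        ring_nf
        norm_num
      calc α * S = α * S * ((2:ℝ) ^ ((1:ℝ)/α - 1) * 2 ^ (1 - 1/α)) := by rw [h22]; ring
      _ = α * 2 ^ ((1:ℝ)/α - 1) * S * 2 ^ (1 - 1/α) := by ring
    have hbb : b * b ^ (1/(α-1)) = b ^ (α/(α-1)) := by
      nth_rewrite 1 [← Real.rpow_one b]
      rw [← Real.rpow_add hb0]
      congr 1
      field_simp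
      ring
    have h2two : (2:ℝ) ^ (1 - 1/α) * 2 ^ (1/α) = 2 := by
      rw [← Real.rpow_add two_pos]; norm_num
    calc d = α * S * ((2*c) ^ (1/α)) := by rw [hd]; ring
    _ = (b * 2 ^ (1 - 1/α)) * (2 ^ (1/α) * (2 * b ^ (1/(α-1)))) := by rw [hαS, h2c, hcα]
    _ = 2 * ((2:ℝ) ^ (1 - 1/α) * 2 ^ (1/α)) * (b * b ^ (1/(α-1))) := by ring
    _ = 4 * b ^ (α/(α-1)) := by rw [h2two, hbb]; ring
  have hd0 : 0 < d := by rw [hd2]; positivity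
  set ε : ℝ := (2 ^ α - 2) * b ^ (α / (α - 1)) with hε
  have hε0 : 0 < ε := by
    have : (0:ℝ) < 2 ^ α - 2 := by linarith
    positivity
  have hcd : c - d/2 = ε := by
    rw [hc, hd2, hε]; ring
  have hlog2 : (0:ℝ) < Real.log 2 := Real.log_pos one_lt_two
  refine ⟨(ε / Real.log 2) ^ (α - 1), Real.rpow_pos_of_pos (by positivity) _,
    fun x hx hxle => ?_⟩
  set A : ℝ := x ^ (-1 / (α - 1)) with hA
  have hA0 : 0 < A := Real.rpow_pos_of_pos hx _
  -- A is large enough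
  have hεA : Real.log 2 ≤ ε * A := by
    have hx0A : ((ε / Real.log 2) ^ (α - 1) : ℝ) ^ (-1 / (α - 1)) = Real.log 2 / ε := by
      rw [← Real.rpow_mul (by positivity)]
      have : (α - 1) * (-1 / (α - 1)) = -1 := by field_simp
      rw [this, Real.rpow_neg_one, inv_div]
    have hAx : (Real.log 2) / ε ≤ A := by
      rw [← hx0A, hA]
      rw [neg_div, Real.rpow_neg hx.le, Real.rpow_neg (by positivity)]
      apply inv_anti₀ (Real.rpow_pos_of_pos hx _)
      exact Real.rpow_le_rpow hx.le hxle (by positivity)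
    calc Real.log 2 = ε * (Real.log 2 / ε) := by field_simp
    _ ≤ ε * A := by nlinarith
  set t : ℝ := c * x ^ (-(α / (α - 1))) with ht
  have ht0 : 0 < t := by
    have := Real.rpow_pos_of_pos hx (-(α / (α - 1)))
    positivity
  have h2t : (2*t) ^ (1/α) = (2*c) ^ (1/α) * A := by
    rw [ht, hA, ← mul_assoc, Real.mul_rpow (by positivity) (Real.rpow_pos_of_pos hx _).le,
      ← Real.rpow_mul hx.le]
    congr 2
    field_simp
  have hexp1 : -(α / (α - 1)) + 1 = -1 / (α - 1) := by
    field_simp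
    linarith
  have htx : t * x = c * A := by
    rw [ht, hA, mul_assoc]
    congr 1
    nth_rewrite 2 [show x = x ^ (1:ℝ) from (Real.rpow_one x).symm]
    rw [← Real.rpow_add hx, hexp1]
  have hfA : (α/2) * ((2*t) ^ (1/α)) * S = d/2 * A := by
    rw [h2t, hd]; ring
  set C : ℝ := α/2 * (2*t) ^ (1/α) with hC
  have hC0 : 0 ≤ C := by
    have : (0:ℝ) ≤ (2*t) ^ (1/α) := Real.rpow_nonneg (by positivity) _
    positivity
  -- random variables
  set X : ℕ → Ω → ℝ := fun k ω => lam k * χ k ω with hX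
  have hXmeas : ∀ k, Measurable (X k) := fun k => (hmeas k).const_mul (lam k)
  have hXindep : iIndepFun X ℙ :=
    hindep.comp (fun k => fun y : ℝ => lam k * y) (fun k => measurable_const_mul _)
  have hmgfk : ∀ k, mgf (X k) ℙ (-t) = (Real.sqrt (1 + 2 * (t * lam k)))⁻¹ :=
    fun k => mgf_term (hmeas k) (hlaw k) ht0.le (hnonneg k)
  -- per-term lower bound
  have hterm : ∀ k, Real.exp (-(C * lam k ^ (1/α))) ≤ mgf (X k) ℙ (-t) := by
    intro k
    rw [hmgfk k]
    have hu : (0:ℝ) ≤ 2 * (t * lam k) := by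
      have := mul_nonneg ht0.le (hnonneg k); linarith
    have h1 : 1 + 2 * (t * lam k) ≤ Real.exp (α * (2*(t*lam k)) ^ (1/α)) :=
      aux_one_add_le hα.le hu
    have hmulr : (2*(t*lam k)) ^ ((1:ℝ)/α) = (2*t) ^ (1/α) * lam k ^ (1/α) := by
      rw [show (2*(t*lam k) : ℝ) = (2*t) * lam k by ring]
      exact Real.mul_rpow (by have := ht0.le; linarith) (hnonneg k)
    have h2 : Real.sqrt (1 + 2 * (t * lam k)) ≤ Real.exp (C * lam k ^ (1/α)) := by
      have hs := Real.sqrt_le_sqrt h1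
      rw [← Real.exp_half] at hs
      calc Real.sqrt (1 + 2*(t*lam k)) ≤ Real.exp (α * (2*(t*lam k)) ^ (1/α) / 2) := hs
      _ = Real.exp (C * lam k ^ (1/α)) := by rw [hmulr, hC]; ring_nf
    have hpos1 : 0 < Real.sqrt (1 + 2 * (t * lam k)) := by
      apply Real.sqrt_pos.2
      nlinarith
    rw [Real.exp_neg]
    exact inv_anti₀ hpos1 h2
  -- lower bound for finite-sum Laplace transforms
  have hprodn : ∀ n : ℕ, Real.exp (-(d/2 * A))
      ≤ ∫ ω, Real.exp ((-t) * (∑ k ∈ Finset.range n, X k) ω) ∂ℙ := by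
    intro n
    have hps : ∑ k ∈ Finset.range n, lam k ^ (1/α) ≤ S :=
      hS ▸ Summable.sum_le_tsum _ (fun j _ => Real.rpow_nonneg (hnonneg j) _) hsum
    have hcalc : Real.exp (-(d/2 * A)) ≤ ∏ k ∈ Finset.range n, mgf (X k) ℙ (-t) := by
      calc Real.exp (-(d/2 * A)) = Real.exp (-(C * S)) := by rw [← hfA]
      _ ≤ Real.exp (-(C * ∑ k ∈ Finset.range n, lam k ^ (1/α))) := by
          apply Real.exp_le_exp.2
          have := mul_le_mul_of_nonneg_left hps hC0
          linarith
      _ = Real.exp (∑ k ∈ Finset.range n, -(C * lam k ^ (1/α))) := by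
          rw [Finset.sum_neg_distrib, ← Finset.mul_sum]
      _ = ∏ k ∈ Finset.range n, Real.exp (-(C * lam k ^ (1/α))) := Real.exp_sum _ _
      _ ≤ ∏ k ∈ Finset.range n, mgf (X k) ℙ (-t) :=
          Finset.prod_le_prod (fun k _ => (Real.exp_pos _).le) (fun k _ => hterm k)
    calc Real.exp (-(d/2 * A)) ≤ ∏ k ∈ Finset.range n, mgf (X k) ℙ (-t) := hcalc
    _ = mgf (∑ k ∈ Finset.range n, X k) ℙ (-t) := (hXindep.mgf_sum hXmeas _).symm
    _ = ∫ ω, Real.exp ((-t) * (∑ k ∈ Finset.range n, X k) ω) ∂ℙ := rfl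
  -- a.s. nonnegativity of the χ k
  have hpos : ∀ᵐ ω ∂ℙ, ∀ k, 0 ≤ χ k ω := by
    rw [ae_all_iff]
    intro k
    have hnull : ℙ (χ k ⁻¹' Set.Iio 0) = 0 := by
      rw [← Measure.map_apply (hmeas k) measurableSet_Iio, hlaw k,
        Measure.map_apply (by fun_prop) measurableSet_Iio]
      have : ((fun u : ℝ => u ^ 2) ⁻¹' Set.Iio 0) = ∅ := by
        ext u
        simp only [Set.mem_preimage, Set.mem_Iio, Set.mem_empty_iff_false, iff_false, not_lt]
        positivity
      rw [this, measure_empty]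
    refine (ae_iff).2 ?_
    convert hnull using 2
    ext ω
    simp [not_le]
  -- the ENNReal-valued sum
  set g : Ω → ℝ≥0∞ := fun ω => ∑' k, ENNReal.ofReal (lam k * χ k ω) with hg
  have hgkmeas : ∀ k : ℕ, Measurable (fun ω => ENNReal.ofReal (lam k * χ k ω)) :=
    fun k => ENNReal.measurable_ofReal.comp ((hmeas k).const_mul (lam k))
  have hgmeas : Measurable g := Measurable.ennreal_tsum hgkmeas
  -- finiteness of the second moment of the gaussian
  have hM : (∫⁻ u : ℝ, ENNReal.ofReal (u^2) ∂(gaussianReal 0 1)) < ∞ := by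
    have hbase : Integrable (fun u : ℝ => u ^ (2:ℝ) * Real.exp (-(1/2 : ℝ) * u^2)) :=
      integrable_rpow_mul_exp_neg_mul_sq (by norm_num) (by norm_num)
    have hbase' : Integrable (fun u : ℝ => u ^ 2 * Real.exp (-(1/2:ℝ) * u^2)) := by
      have : ∀ u : ℝ, u ^ (2:ℝ) = u ^ 2 := fun u => by
        rw [show ((2:ℝ) = ((2:ℕ):ℝ)) by norm_num, Real.rpow_natCast]
      simpa [this] using hbase
    have hint : Integrable (fun u : ℝ => gaussianPDFReal 0 1 u * u ^ 2) := by
      have heq : ∀ u : ℝ, gaussianPDFReal 0 1 u * u ^ 2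
          = (Real.sqrt (2 * Real.pi))⁻¹ * (u ^ 2 * Real.exp (-(1/2:ℝ) * u^2)) := by
        intro u
        simp only [gaussianPDFReal, NNReal.coe_one, mul_one, sub_zero]
        rw [show (-u^2/2 : ℝ) = -(1/2:ℝ)*u^2 by ring]
        ring
      exact (hbase'.const_mul _).congr (ae_of_all _ fun u => (heq u).symm)
    have hPDFmeas : Measurable (gaussianPDF 0 1) :=
      (measurable_gaussianPDFReal 0 1).ennreal_ofReal
    rw [gaussianReal_of_var_ne_zero 0 one_ne_zero,
      lintegral_withDensity_eq_lintegral_mul _ hPDFmeas (by fun_prop)]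
    have : ∀ u : ℝ, (gaussianPDF 0 1 u) * ENNReal.ofReal (u ^ 2)
        = ENNReal.ofReal (gaussianPDFReal 0 1 u * u ^ 2) := fun u =>
      (ENNReal.ofReal_mul (gaussianPDFReal_nonneg 0 1 u)).symm
    simp_rw [Pi.mul_apply, this]
    exact hint.lintegral_lt_top
  have hVk : ∀ k : ℕ, ∫⁻ ω, ENNReal.ofReal (χ k ω) ∂ℙ
      = ∫⁻ u : ℝ, ENNReal.ofReal (u^2) ∂(gaussianReal 0 1) := by
    intro k
    rw [← lintegral_map ENNReal.measurable_ofReal (hmeas k), hlaw k,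
      lintegral_map (by fun_prop) (by fun_prop)]
  -- summability of lam
  have hlamsum : Summable lam := by
    have hle : ∀ k, lam k ≤ (lam 0 ^ (1 - 1/α)) * lam k ^ (1/α) := by
      intro k
      rcases eq_or_lt_of_le (hnonneg k) with h0 | h0
      · rw [← h0, Real.zero_rpow (by positivity : ((1:ℝ)/α) ≠ 0), mul_zero]
      · have h1 : lam k = lam k ^ ((1:ℝ) - 1/α) * lam k ^ ((1:ℝ)/α) := by
          rw [← Real.rpow_add h0]
          norm_num
        calc lam k = lam k ^ ((1:ℝ) - 1/α) * lam k ^ ((1:ℝ)/α) := h1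
        _ ≤ lam 0 ^ ((1:ℝ) - 1/α) * lam k ^ ((1:ℝ)/α) := by
            apply mul_le_mul_of_nonneg_right _ (Real.rpow_nonneg (hnonneg k) _)
            exact Real.rpow_le_rpow (hnonneg k) (hanti (Nat.zero_le k))
              (by rw [sub_nonneg, div_le_one hα0]; linarith)
    exact Summable.of_nonneg_of_le hnonneg hle (hsum.mul_left _)
  -- a.s. finiteness of g
  have hgfin : ∀ᵐ ω ∂ℙ, g ω < ∞ := by
    refine ae_lt_top hgmeas ?_
    have h1 : ∫⁻ ω, g ω ∂ℙ = ∑' k, ∫⁻ ω, ENNReal.ofReal (lam k * χ k ω) ∂ℙ := by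
      simp only [hg]
      exact lintegral_tsum (fun k => (hgkmeas k).aemeasurable)
    have h2 : ∀ k : ℕ, ∫⁻ ω, ENNReal.ofReal (lam k * χ k ω) ∂ℙ
        = ENNReal.ofReal (lam k) * ∫⁻ u : ℝ, ENNReal.ofReal (u^2) ∂(gaussianReal 0 1) := by
      intro k
      rw [← hVk k, ← lintegral_const_mul _ (by fun_prop)]
      congr 1
      ext ω
      exact ENNReal.ofReal_mul (hnonneg k)
    rw [h1]
    simp_rw [h2]
    rw [ENNReal.tsum_mul_right]
    apply (ENNReal.mul_lt_top _ hM).ne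
    rw [← ENNReal.ofReal_tsum_of_nonneg hnonneg hlamsum]
    exact ENNReal.ofReal_lt_top
  set Wm : Ω → ℝ := fun ω => (g ω).toReal with hWm
  have hWmmeas : Measurable Wm := hgmeas.ennreal_toReal
  have hWmnn : ∀ ω, 0 ≤ Wm ω := fun ω => ENNReal.toReal_nonneg
  -- good events
  have hgood : ∀ᵐ ω ∂ℙ, (∑' k, lam k * χ k ω) = Wm ω ∧
      Tendsto (fun n => ∑ k ∈ Finset.range n, lam k * χ k ω) atTop (nhds (Wm ω)) := by
    filter_upwards [hpos, hgfin] with ω hωpos hωfin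
    have hnn : ∀ k, 0 ≤ lam k * χ k ω := fun k => mul_nonneg (hnonneg k) (hωpos k)
    have hsummable : Summable (fun k => lam k * χ k ω) := by
      have h := ENNReal.summable_toReal hωfin.ne
      have : ∀ k : ℕ, (ENNReal.ofReal (lam k * χ k ω)).toReal = lam k * χ k ω :=
        fun k => ENNReal.toReal_ofReal (hnn k)
      simpa [this] using h
    have heq : Wm ω = ∑' k, lam k * χ k ω := by
      simp only [hWm, hg]
      rw [ENNReal.tsum_toReal_eq (fun k => ENNReal.ofReal_ne_top)]
      exact tsum_congr fun k => ENNReal.toReal_ofReal (hnn k)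
    refine ⟨heq.symm, ?_⟩
    rw [heq]
    exact hsummable.hasSum.tendsto_sum_nat
  -- dominated convergence
  have hFmeas : ∀ n, AEStronglyMeasurable
      (fun ω => Real.exp ((-t) * (∑ k ∈ Finset.range n, X k) ω)) ℙ := by
    intro n
    have hms : Measurable fun ω => (∑ k ∈ Finset.range n, X k) ω := by
      simp only [Finset.sum_apply]
      exact Finset.measurable_sum _ (fun k _ => hXmeas k)
    exact ((hms.const_mul (-t)).exp).aestronglyMeasurable
  have hDCT : Tendsto (fun n => ∫ ω, Real.exp ((-t) * (∑ k ∈ Finset.range n, X k) ω) ∂ℙ)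
      atTop (nhds (∫ ω, Real.exp ((-t) * Wm ω) ∂ℙ)) := by
    apply tendsto_integral_of_dominated_convergence (fun _ => (1:ℝ)) hFmeas (integrable_const 1)
    · intro n
      filter_upwards [hpos] with ω hωpos
      have hsn : 0 ≤ (∑ k ∈ Finset.range n, X k) ω := by
        rw [Finset.sum_apply]
        exact Finset.sum_nonneg fun k _ => mul_nonneg (hnonneg k) (hωpos k)
      rw [Real.norm_eq_abs, abs_of_pos (Real.exp_pos _)]
      apply Real.exp_le_one_iff.2
      have := mul_nonneg ht0.le hsn
      linarith
    · filter_upwards [hgood] with ω hω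
      have h1 : Tendsto (fun n => (-t) * (∑ k ∈ Finset.range n, lam k * χ k ω)) atTop
          (nhds ((-t) * Wm ω)) := hω.2.const_mul (-t)
      have h2 := h1.rexp
      convert h2 using 2 with n
      rw [Finset.sum_apply]
  have hlow : Real.exp (-(d/2 * A)) ≤ ∫ ω, Real.exp ((-t) * Wm ω) ∂ℙ :=
    ge_of_tendsto hDCT (Eventually.of_forall hprodn)
  -- Markov-type upper bound for the Laplace transform
  have hintW : Integrable (fun ω => Real.exp ((-t) * Wm ω)) ℙ := by
    refine Integrable.mono' (integrable_const (1:ℝ))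
      (((hWmmeas.const_mul (-t)).exp).aestronglyMeasurable) (ae_of_all _ fun ω => ?_)
    rw [Real.norm_eq_abs, abs_of_pos (Real.exp_pos _)]
    apply Real.exp_le_one_iff.2
    have := mul_nonneg ht0.le (hWmnn ω)
    linarith
  have hsetm : MeasurableSet {ω | Wm ω ≤ x} := measurableSet_le hWmmeas measurable_const
  have hptw : ∀ ω, Real.exp ((-t) * Wm ω)
      ≤ Set.indicator {ω | Wm ω ≤ x} (fun _ => (1:ℝ)) ω + Real.exp (-(t*x)) := by
    intro ω
    by_cases h : Wm ω ≤ x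
    · rw [Set.indicator_of_mem (show ω ∈ {ω' | Wm ω' ≤ x} from h)]
      have h1 : Real.exp ((-t) * Wm ω) ≤ 1 := by
        apply Real.exp_le_one_iff.2
        have := mul_nonneg ht0.le (hWmnn ω)
        linarith
      linarith [Real.exp_pos (-(t*x))]
    · rw [Set.indicator_of_notMem (show ω ∉ {ω' | Wm ω' ≤ x} from h), zero_add]
      apply Real.exp_le_exp.2
      push_neg at h
      nlinarith
  have hMarkov : ∫ ω, Real.exp ((-t) * Wm ω) ∂ℙ
      ≤ (ℙ {ω | Wm ω ≤ x}).toReal + Real.exp (-(t*x)) := by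
    have hi1 : Integrable (fun ω => Set.indicator {ω | Wm ω ≤ x} (fun _ => (1:ℝ)) ω) ℙ :=
      (integrable_const 1).indicator hsetm
    have hi2 : Integrable (fun ω => Set.indicator {ω' | Wm ω' ≤ x} (fun _ => (1:ℝ)) ω
        + Real.exp (-(t*x))) ℙ := hi1.add (integrable_const _)
    have h := integral_mono hintW hi2 hptw
    have heval : ∫ ω, (Set.indicator {ω' | Wm ω' ≤ x} (fun _ => (1:ℝ)) ω
        + Real.exp (-(t*x))) ∂ℙ = (ℙ {ω | Wm ω ≤ x}).toReal + Real.exp (-(t*x)) := by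
      rw [integral_add hi1 (integrable_const _), integral_indicator_const (1:ℝ) hsetm,
        integral_const]
      simp [Measure.real]
    rw [heval] at h
    exact h
  -- relate the events
  have hae2 : ∀ᵐ ω ∂ℙ, (∑' k, lam k * χ k ω) = Wm ω := hgood.mono fun ω h => h.1
  have hPle : ℙ {ω | Wm ω ≤ x} ≤ ℙ {ω | (∑' k, lam k * χ k ω) ≤ x} := by
    have hcompl : ℙ {ω | ¬ ((∑' k, lam k * χ k ω) = Wm ω)} = 0 := by
      exact hae2
    calc ℙ {ω | Wm ω ≤ x}
        ≤ ℙ ({ω | (∑' k, lam k * χ k ω) ≤ x} ∪ {ω | ¬ ((∑' k, lam k * χ k ω) = Wm ω)}) := by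
          apply measure_mono
          intro ω hω
          by_cases he : (∑' k, lam k * χ k ω) = Wm ω
          · left
            simp only [Set.mem_setOf_eq] at *
            rw [he]
            exact hω
          · right
            exact he
    _ ≤ ℙ {ω | (∑' k, lam k * χ k ω) ≤ x} + ℙ {ω | ¬ ((∑' k, lam k * χ k ω) = Wm ω)} :=
          measure_union_le _ _
    _ = ℙ {ω | (∑' k, lam k * χ k ω) ≤ x} := by rw [hcompl, add_zero]
  have hPleR : (ℙ {ω | Wm ω ≤ x}).toReal ≤ (ℙ {ω | (∑' k, lam k * χ k ω) ≤ x}).toReal :=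
    ENNReal.toReal_mono (measure_ne_top _ _) hPle
  -- final assembly
  have hhalf : Real.exp (-(t*x)) ≤ (1/2) * Real.exp (-(d/2 * A)) := by
    rw [htx, show ((1:ℝ)/2) = Real.exp (-(Real.log 2)) by
      rw [Real.exp_neg, Real.exp_log two_pos]; norm_num, ← Real.exp_add]
    apply Real.exp_le_exp.2
    have h := hεA
    rw [← hcd] at h
    nlinarith
  have h14 : (1/4 : ℝ) * Real.exp (-d * A) ≤ (1/2) * Real.exp (-(d/2 * A)) := by
    have hE : Real.exp (-d * A) ≤ Real.exp (-(d/2 * A)) := by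
      apply Real.exp_le_exp.2
      nlinarith
    nlinarith [Real.exp_pos (-d * A)]
  have hfinal : (1/2 : ℝ) * Real.exp (-(d/2 * A)) ≤ (ℙ {ω | Wm ω ≤ x}).toReal := by
    nlinarith [hlow, hMarkov, hhalf]
  calc (1/4 : ℝ) * Real.exp (-d * A) ≤ (1/2) * Real.exp (-(d/2 * A)) := h14
  _ ≤ (ℙ {ω | Wm ω ≤ x}).toReal := hfinal
  _ ≤ (ℙ {ω | (∑' k, lam k * χ k ω) ≤ x}).toReal := hPleR
end
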